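/- If the continuum satisfies 2^ℵ₀ ≤ κ⁺ for an infinite cardinal κ, then ℝ \ {0} can be covered by κ-many rationally independent sets (sets S ⊆ ℝ such that every finite ℚ-linear combination of distinct elements of S with nonzero rational coefficients is nonzero). -/

import Mathlib

open Cardinal

theorem stmt0 (κ : Cardinal.{0}) (hκ : ℵ₀ ≤ κ) (h : 𝔠 ≤ Order.succ κ) :
    ∃ (ι : Type) (S : ι → Set ℝ), #ι ≤ κ ∧
      (∀ i, LinearIndependent ℚ ((↑) : S i → ℝ)) ∧
      {x : ℝ | x ≠ 0} ⊆ ⋃ i, S i := by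
  classical
  set B := Module.Basis.ofVectorSpace ℚ ℝ with hBdef
  set ιB := Module.Basis.ofVectorSpaceIndex ℚ ℝ with hιBdef
  haveI : Nonempty ιB := B.index_nonempty
  obtain ⟨r, wo, hr⟩ := Cardinal.ord_eq ιB
  haveI := wo
  set τ : ιB → Ordinal := fun i => Ordinal.typein r i with hτdef
  have hτinj : Function.Injective τ := Ordinal.typein_injective r
  -- initial segments are small
  have hseg : ∀ i₀ : ιB, #{j : ιB // τ j < τ i₀} ≤ κ := by
    intro i₀
    have h1 : #{j : ιB // r j i₀} = (Ordinal.typein r i₀).card := Ordinal.card_typein i₀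
    have h2 : Ordinal.typein r i₀ < (Order.succ κ).ord := by
      have := Ordinal.typein_lt_type r i₀
      rw [← hr] at this
      exact this.trans_le (Cardinal.ord_le_ord.2 ((Cardinal.mk_set_le _).trans
        (by rw [Cardinal.mk_real]; exact h)))
    have h3 : (Ordinal.typein r i₀).card < Order.succ κ := Cardinal.lt_ord.1 h2
    have h4 : #{j : ιB // r j i₀} ≤ κ := by
      rw [h1]; exact Order.lt_succ_iff.1 h3
    have : {j : ιB // τ j < τ i₀} = {j : ιB // r j i₀} := by
      simp only [hτdef, Ordinal.typein_lt_typein]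
    rw [this]; exact h4
  -- max-element data
  have hm_ex : ∀ x : ℝ, x ≠ 0 → ∃ i : ιB, i ∈ (B.repr x).support ∧
      ∀ j ∈ (B.repr x).support, τ j ≤ τ i := by
    intro x hx
    have hne : ((B.repr x).support).Nonempty := by
      rw [Finsupp.support_nonempty_iff]
      simpa using hx
    obtain ⟨i, hi, hmax⟩ := Finset.exists_max_image _ τ hne
    exact ⟨i, hi, hmax⟩
  set m : ℝ → ιB := fun x => if hx : x ≠ 0 then (hm_ex x hx).choose else Classical.arbitrary ιB
    with hmdef
  have hmP : ∀ x, (hx : x ≠ 0) → (m x ∈ (B.repr x).support ∧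
      ∀ j ∈ (B.repr x).support, τ j ≤ τ (m x)) := by
    intro x hx
    simp only [hmdef, dif_pos hx]
    exact (hm_ex x hx).choose_spec
  set q : ℝ → ℚ := fun x => B.repr x (m x) with hqdef
  set y : ℝ → ℝ := fun x => x - q x • (B (m x)) with hydef
  have hq : ∀ x, x ≠ 0 → q x ≠ 0 := by
    intro x hx
    exact Finsupp.mem_support_iff.1 (hmP x hx).1
  -- repr of y
  have hyrepr : ∀ x : ℝ, ∀ j : ιB, B.repr (y x) j = if j = m x then 0 else B.repr x j := by
    intro x j
    have : B.repr (y x) = B.repr x - q x • Finsupp.single (m x) 1 := by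
      simp [hydef, map_sub, map_smul, Module.Basis.repr_self]
    rw [this]
    by_cases hj : j = m x
    · subst hj; simp [hqdef]
    · simp [Finsupp.single_apply, Ne.symm hj, hj]
  have hyD : ∀ x : ℝ, x ≠ 0 → ∀ j ∈ (B.repr (y x)).support, τ j < τ (m x) := by
    intro x hx j hj
    rw [Finsupp.mem_support_iff, hyrepr] at hj
    by_cases hjm : j = m x
    · simp [hjm] at hj
    · rw [if_neg hjm] at hj
      have hle : τ j ≤ τ (m x) := (hmP x hx).2 j (Finsupp.mem_support_iff.2 hj)
      exact lt_of_le_of_ne hle (fun e => hjm (hτinj e))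
  set Dset : ιB → Set ℝ := fun i₀ => {z : ℝ | ∀ j ∈ (B.repr z).support, τ j < τ i₀}
    with hDdef
  have hDcard : ∀ i₀ : ιB, #(Dset i₀) ≤ κ := by
    intro i₀
    have hinj : Function.Injective
        (fun z : Dset i₀ => (B.repr (z : ℝ)).subtypeDomain (fun j : ιB => τ j < τ i₀)) := by
      intro z1 z2 hz
      have : B.repr (z1 : ℝ) = B.repr (z2 : ℝ) := by
        ext j
        by_cases hj : τ j < τ i₀
        · have := congrArg (fun f => f ⟨j, hj⟩) hz
          simpa [Finsupp.subtypeDomain_apply] using this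
        · have h1 : B.repr (z1 : ℝ) j = 0 := by
            by_contra hc
            exact hj (z1.2 j (Finsupp.mem_support_iff.2 hc))
          have h2 : B.repr (z2 : ℝ) j = 0 := by
            by_contra hc
            exact hj (z2.2 j (Finsupp.mem_support_iff.2 hc))
          rw [h1, h2]
      exact Subtype.ext (B.repr.injective this)
    have h1 : #(Dset i₀) ≤ #({j : ιB // τ j < τ i₀} →₀ ℚ) := Cardinal.mk_le_of_injective hinj
    refine h1.trans ?_
    cases isEmpty_or_nonempty {j : ιB // τ j < τ i₀} with
    | inl he =>
      haveI : Subsingleton ({j : ιB // τ j < τ i₀} →₀ ℚ) :=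
        ⟨fun a b => Finsupp.ext fun j => (he.false j).elim⟩
      exact (Cardinal.mk_le_aleph0).trans hκ
    | inr hne =>
      rw [Cardinal.mk_finsupp_of_infinite']
      exact max_le (hseg i₀) ((Cardinal.mk_denumerable ℚ).le.trans hκ)
  haveI hK : Nonempty (Quotient.out κ) := by
    rw [← Cardinal.mk_ne_zero_iff, Cardinal.mk_out]
    exact fun e => (Cardinal.aleph0_pos).not_ge (e ▸ hκ)
  have he_ex : ∀ i₀ : ιB, Nonempty ((Dset i₀) ↪ Quotient.out κ) := by
    intro i₀
    rw [← Cardinal.le_def]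
    rw [Cardinal.mk_out]
    exact hDcard i₀
  set e : ∀ i₀ : ιB, (Dset i₀) ↪ Quotient.out κ := fun i₀ => (he_ex i₀).some with hedef
  set E : ιB → ℝ → Quotient.out κ := fun i z =>
    if hz : z ∈ Dset i then e i ⟨z, hz⟩ else Classical.arbitrary _ with hEdef
  have hEinj : ∀ (i : ιB) (z1 z2 : ℝ), z1 ∈ Dset i → z2 ∈ Dset i →
      E i z1 = E i z2 → z1 = z2 := by
    intro i z1 z2 h1 h2 hE
    simp only [hEdef, dif_pos h1, dif_pos h2] at hE
    exact congrArg Subtype.val ((e i).injective hE)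
  set χ : ℝ → Quotient.out κ × ℚ := fun x => (E (m x) (y x), q x) with hχdef
  set S : Quotient.out κ × ℚ → Set ℝ := fun p => {x | x ≠ 0 ∧ χ x = p} with hSdef
  refine ⟨Quotient.out κ × ℚ, S, ?_, ?_, ?_⟩
  · have : #(Quotient.out κ × ℚ) = κ * ℵ₀ := by
      simp [Cardinal.mk_out]
    rw [this, Cardinal.mul_eq_max hκ le_rfl, max_eq_left hκ]
  · intro p
    refine (linearIndependent_subtype_iff.trans linearIndepOn_iff).2 ?_
    intro l hls hl
    by_contra hl0
    have hsupp : l.support.Nonempty := Finsupp.support_nonempty_iff.2 hl0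
    obtain ⟨x₀, hx₀s, hx₀max⟩ := Finset.exists_max_image l.support (fun x => τ (m x)) hsupp
    have hmem : ∀ x ∈ l.support, x ∈ S p := fun x hx =>
      (Finsupp.mem_supported ℚ l).1 hls hx
    have hx₀S : x₀ ∈ S p := hmem x₀ hx₀s
    obtain ⟨hx₀ne, hχx₀⟩ := hx₀S
    -- all other elements of the support have strictly smaller top index
    have hlt : ∀ x ∈ l.support, x ≠ x₀ → τ (m x) < τ (m x₀) := by
      intro x hx hne
      refine lt_of_le_of_ne (hx₀max x hx) ?_
      intro heq
      have hmeq : m x = m x₀ := hτinj heq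
      obtain ⟨hxne, hχx⟩ := hmem x hx
      have hχeq : χ x = χ x₀ := hχx.trans hχx₀.symm
      have hE : E (m x) (y x) = E (m x₀) (y x₀) := congrArg Prod.fst hχeq
      have hqeq : q x = q x₀ := congrArg Prod.snd hχeq
      rw [hmeq] at hE
      have hDx : y x ∈ Dset (m x₀) := by
        rw [← hmeq]
        exact hyD x hxne
      have hDx₀ : y x₀ ∈ Dset (m x₀) := hyD x₀ hx₀ne
      have hyeq : y x = y x₀ := hEinj _ _ _ hDx hDx₀ hE
      apply hne
      have : x - q x • (B (m x)) = x₀ - q x₀ • (B (m x₀)) := hyeq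
      rw [hmeq, hqeq] at this
      exact sub_left_injective this
    -- extract the coefficient of B (m x₀)
    have h0 : (B.repr (Finsupp.linearCombination ℚ id l)) (m x₀) = 0 := by
      rw [hl]; simp
    rw [Finsupp.linearCombination_apply, Finsupp.sum] at h0
    have hsum : (B.repr (∑ x ∈ l.support, l x • id x)) (m x₀)
        = ∑ x ∈ l.support, l x * B.repr x (m x₀) := by
      rw [map_sum, Finsupp.finset_sum_apply]
      refine Finset.sum_congr rfl fun x hx => ?_
      rw [map_smul]
      simp
    rw [hsum] at h0
    have hzero : ∀ x ∈ l.support, x ≠ x₀ → l x * B.repr x (m x₀) = 0 := by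
      intro x hx hne
      have : B.repr x (m x₀) = 0 := by
        rw [← Finsupp.notMem_support_iff]
        intro hmem'
        obtain ⟨hxne, _⟩ := hmem x hx
        exact absurd (hlt x hx hne) (not_lt.2 ((hmP x hxne).2 _ hmem'))
      rw [this, mul_zero]
    rw [Finset.sum_eq_single x₀ hzero (fun hnot => absurd hx₀s hnot)] at h0
    have : l x₀ ≠ 0 := Finsupp.mem_support_iff.1 hx₀s
    exact (mul_ne_zero this (hq x₀ hx₀ne)) h0
  · intro x hx
    exact Set.mem_iUnion.2 ⟨χ x, hx, rfl⟩
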